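/- Fix a token alphabet Σ, a source list s = [s_1,…,s_n] over Σ, and a phrase vocabulary V, a finite set of nonempty lists over Σ. If a target list t over Σ is realizable from s with vocabulary V, then there exist indices 1 ≤ i_1 < i_2 < ⋯ < i_r ≤ n and a decomposition t = g_0 ++ [s_{i_1}] ++ g_1 ++ [s_{i_2}] ++ ⋯ ++ [s_{i_r}] ++ g_r such that: the list [s_{i_1},…,s_{i_r}] is a common subsequence of s and t; each gap segment g_j is a concatenation of elements of V; g_0 is a concatenation of at most i_1 phrases; for each 1 ≤ j < r, g_j is a concatenation of at most i_{j+1} − i_j phrases; and g_r is a concatenation of at most n − i_r phrases (so in particular g_r is empty when i_r = n). In the case r = 0, t itself is a concatenation of at most n elements of V. -/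

import Mathlib

/-- The realization of a tag sequence: for each source token `s i` tagged with
`(b i, p i)`, output the added phrase `p i` followed by `[s i]` if `b i = KEEP`
(encoded `true`) and by nothing if `b i = DELETE` (encoded `false`). -/
def realization {α : Type*} (s : List α) (tags : List (Bool × List α)) : List α :=
  (s.zip tags).flatMap fun x => x.2.2 ++ (if x.2.1 then [x.1] else [])

/-- A target `t` is realizable from the source `s` with phrase vocabulary `V`
if some tag sequence for `s` (one tag per source token, each added phrase
empty or in `V`) realizes to `t`. -/
def Realizable {α : Type*} (V : Finset (List α)) (s t : List α) : Prop :=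
  ∃ tags : List (Bool × List α), tags.length = s.length ∧
    (∀ bp ∈ tags, bp.2 = [] ∨ bp.2 ∈ V) ∧ realization s tags = t

def wrapP {α : Type*} (p : List α) : List (List α) :=
  if p.isEmpty then [] else [p]

lemma wrapP_flatten {α : Type*} (p : List α) : (wrapP p).flatten = p := by
  cases p <;> simp [wrapP]

lemma wrapP_length {α : Type*} (p : List α) : (wrapP p).length ≤ 1 := by
  cases p <;> simp [wrapP]

lemma wrapP_mem {α : Type*} {V : Finset (List α)} {p : List α}
    (hp : p = [] ∨ p ∈ V) : ∀ q ∈ wrapP p, q ∈ V := by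
  rcases hp with rfl | hp
  · simp [wrapP]
  · cases p <;> simp_all [wrapP]

lemma realization_cons {α : Type*} (a : α) (s : List α) (b : Bool) (p : List α)
    (tags : List (Bool × List α)) :
    realization (a :: s) ((b, p) :: tags) =
      p ++ (if b then [a] else []) ++ realization s tags := by
  simp [realization]

/-- **Kept tokens form a common subsequence, gaps come from the vocabulary.**
If `t` is realizable from `s` with vocabulary `V` of nonempty phrases, then
there are (0-based) positions `idx 0 < idx 1 < ⋯ < idx (r-1)` in `s` and gap
segments `gs 0, …, gs r`, each a concatenation of phrases of `V`, with
`t = gs 0 ++ [s (idx 0)] ++ gs 1 ++ ⋯ ++ [s (idx (r-1))] ++ gs r`;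
the kept tokens `[s (idx 0), …, s (idx (r-1))]` form a common subsequence of
`s` and `t`; `gs 0` uses at most `idx 0 + 1` phrases (i.e. at most `i₁` in
1-based numbering); the gap after the `j`-th kept token uses at most
`idx (j+1) - idx j` phrases, and the final gap at most `n - idx (r-1) - 1`
phrases (so it is empty when the last kept token is the last source token);
when `r = 0`, `t` itself is a concatenation of at most `n` phrases of `V`. -/
theorem realizable_common_subsequence_decomposition {α : Type*}
    (V : Finset (List α)) (hV : ∀ p ∈ V, p ≠ []) (s t : List α)
    (h : Realizable V s t) :
    ∃ (r : ℕ) (idx : Fin r → Fin s.length) (gs : Fin (r + 1) → List (List α)),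
      StrictMono idx ∧
      (∀ j, ∀ p ∈ gs j, p ∈ V) ∧
      (List.ofFn fun j => s.get (idx j)).Sublist s ∧
      (List.ofFn fun j => s.get (idx j)).Sublist t ∧
      t = (gs 0).flatten ++
        (List.ofFn fun j : Fin r => s.get (idx j) :: (gs j.succ).flatten).flatten ∧
      (gs 0).length ≤ (if h0 : 0 < r then (idx ⟨0, h0⟩).val + 1 else s.length) ∧
      (∀ j : Fin r, (gs j.succ).length ≤
        if hj : j.val + 1 < r then (idx ⟨j.val + 1, hj⟩).val - (idx j).val
        else s.length - (idx j).val - 1) := by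
  induction s generalizing t with
  | nil =>
    obtain ⟨tags, hlen, hmem, hreal⟩ := h
    have htags : tags = [] := List.eq_nil_of_length_eq_zero hlen
    subst htags
    simp [realization] at hreal
    refine ⟨0, Fin.elim0, fun _ => [], fun i => i.elim0, by simp, by simp, by simp, ?_, by simp, fun j => j.elim0⟩
    simp [← hreal]
  | cons a s' ih =>
    obtain ⟨tags, hlen, hmem, hreal⟩ := h
    rcases tags with _ | ⟨⟨b, p⟩, tags'⟩
    · simp at hlen
    have hlen' : tags'.length = s'.length := by simpa using hlen
    have hp : p = [] ∨ p ∈ V := hmem (b, p) List.mem_cons_self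
    have hmem' : ∀ bp ∈ tags', bp.2 = [] ∨ bp.2 ∈ V := fun bp hb => hmem bp (List.mem_cons_of_mem _ hb)
    obtain ⟨r', idx', gs', hmono, hgsV, hsubs, hsubt, heq, hg0, hlast⟩ :=
      ih (realization s' tags') ⟨tags', hlen', hmem', rfl⟩
    rw [realization_cons] at hreal
    cases b with
    | false =>
      simp only [Bool.false_eq_true, if_false, List.append_nil] at hreal
      refine ⟨r', fun j => (idx' j).succ,
        Fin.cases (wrapP p ++ gs' 0) (fun k => gs' k.succ), ?_, ?_, ?_, ?_, ?_, ?_, ?_⟩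
      · intro i j hij
        exact Fin.succ_lt_succ_iff.mpr (hmono hij)
      · intro j q hq
        rcases Fin.eq_zero_or_eq_succ j with rfl | ⟨m, rfl⟩
        · simp only [Fin.cases_zero, List.mem_append] at hq
          rcases hq with hq | hq
          · exact wrapP_mem hp q hq
          · exact hgsV 0 q hq
        · simp only [Fin.cases_succ] at hq
          exact hgsV m.succ q hq
      · simpa using hsubs.cons a
      · rw [← hreal]
        refine List.Sublist.trans ?_ (List.sublist_append_right p _)
        simpa using hsubt
      · rw [← hreal, heq]
        simp [List.flatten_append, wrapP_flatten, List.append_assoc]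
      · simp only [Fin.cases_zero, List.length_append, List.length_cons]
        have hw := wrapP_length p
        by_cases h0 : 0 < r' <;> simp [h0] at hg0 ⊢ <;> omega
      · intro j
        have := hlast j
        simp only [Fin.cases_succ, List.length_cons, Fin.val_succ]
        by_cases hj : j.val + 1 < r' <;> simp [hj] at this ⊢ <;> omega
    | true =>
      rw [if_pos rfl] at hreal
      refine ⟨r' + 1, Fin.cases ⟨0, Nat.succ_pos _⟩ (fun k => (idx' k).succ),
        Fin.cases (wrapP p) gs', ?_, ?_, ?_, ?_, ?_, ?_, ?_⟩
      · intro i j hij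
        rcases Fin.eq_zero_or_eq_succ j with rfl | ⟨m, rfl⟩
        · exact absurd hij (by simp)
        rcases Fin.eq_zero_or_eq_succ i with rfl | ⟨k, rfl⟩
        · simp only [Fin.cases_zero, Fin.cases_succ]
          exact Fin.mk_lt_mk.mpr (Nat.succ_pos _)
        · simp only [Fin.cases_succ]
          exact Fin.succ_lt_succ_iff.mpr (hmono (by simpa using hij))
      · intro j q hq
        rcases Fin.eq_zero_or_eq_succ j with rfl | ⟨m, rfl⟩
        · exact wrapP_mem hp q (by simpa using hq)
        · exact hgsV m q (by simpa using hq)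
      · simp only [List.ofFn_succ, Fin.cases_zero, Fin.cases_succ]
        simpa using hsubs.cons₂ a
      · rw [← hreal]
        simp only [List.ofFn_succ, Fin.cases_zero, Fin.cases_succ, List.append_assoc]
        refine List.Sublist.trans ?_ (List.sublist_append_right p _)
        simpa using hsubt.cons₂ a
      · rw [← hreal, heq]
        simp [List.ofFn_succ, wrapP_flatten, List.append_assoc]
      · have hw := wrapP_length p
        simp only [Fin.cases_zero, Nat.zero_lt_succ, dif_pos, Fin.mk_zero, Fin.cases_zero]
        omega
      · intro j
        rcases Fin.eq_zero_or_eq_succ j with rfl | ⟨m, rfl⟩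
        · simp only [Fin.val_zero, Fin.cases_succ, Fin.cases_succ', Fin.cases_zero,
            Fin.val_succ, Fin.val_mk]
          by_cases h0 : 0 < r'
          · rw [dif_pos h0] at hg0
            simpa [h0] using hg0
          · rw [dif_neg h0] at hg0
            obtain rfl : r' = 0 := by omega
            simpa using hg0
        · simp only [Fin.cases_succ, Fin.val_succ]
          have hm := hlast m
          by_cases hc : m.val + 1 < r'
          · rw [dif_pos hc] at hm
            rw [dif_pos (by omega : m.val + 1 + 1 < r' + 1)]
            simp only [Fin.cases_succ', Fin.cases_succ, Fin.val_succ]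
            omega
          · rw [dif_neg hc] at hm
            rw [dif_neg (by omega : ¬ (m.val + 1 + 1 < r' + 1))]
            simp only [Fin.cases_succ, Fin.val_succ, List.length_cons]
            omega
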